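/- A bounded linear functional f : A → ℂ on a unital C*-algebra A is positive if and only if f(1) is a nonnegative real number and ‖f‖ ≤ f(1), where ‖f‖ is the operator norm. -/

import Mathlib

open scoped ComplexOrder

section Aux

variable {A : Type*} [CStarAlgebra A] [PartialOrder A] [StarOrderedRing A]

/-- A positive functional is real on selfadjoint elements. -/
lemma aux_im_eq_zero (f : A →L[ℂ] ℂ) (hf : ∀ a : A, 0 ≤ a → 0 ≤ f a)
    {k : A} (hk : IsSelfAdjoint k) : (f k).im = 0 := by
  have h1 := hf _ (CFC.posPart_nonneg k)
  have h2 := hf _ (CFC.negPart_nonneg k)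
  rw [Complex.nonneg_iff] at h1 h2
  have hks : f k = f k⁺ - f k⁻ := by rw [← map_sub, CFC.posPart_sub_negPart k hk]
  rw [hks, Complex.sub_im, ← h1.2, ← h2.2, sub_zero]

end Aux

/-- A bounded linear functional `f` on a unital C*-algebra is positive if and only if
`f 1` is a nonnegative real number and `‖f‖ ≤ f 1`. -/
theorem positive_functional_iff_norm_le_apply_one
    {A : Type*} [CStarAlgebra A] [PartialOrder A] [StarOrderedRing A]
    (f : A →L[ℂ] ℂ) :
    (∀ a : A, 0 ≤ a → 0 ≤ f a) ↔ (0 ≤ f 1 ∧ ‖f‖ ≤ (f 1).re) := by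
  constructor
  · intro hf
    have h1 : 0 ≤ f 1 := hf 1 (by simpa using star_mul_self_nonneg (1 : A))
    refine ⟨h1, ?_⟩
    have h1re : 0 ≤ (f 1).re := (Complex.nonneg_iff.mp h1).1
    have hmono : ∀ {a b : A}, a ≤ b → f a ≤ f b := by
      intro a b hab
      have h0 := hf _ (sub_nonneg.2 hab)
      rw [map_sub] at h0
      exact sub_nonneg.mp h0
    have hre : ∀ h : A, IsSelfAdjoint h → (f h).re ≤ (f 1).re * ‖h‖ := by
      intro h hh
      have hle := hmono hh.le_algebraMap_norm_self
      have heq : f (algebraMap ℝ A ‖h‖) = (‖h‖ : ℂ) * f 1 := by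
        rw [Algebra.algebraMap_eq_smul_one, f.map_smul_of_tower, Complex.real_smul]
      rw [heq] at hle
      have := (Complex.le_def.mp hle).1
      simpa [Complex.mul_re, mul_comm] using this
    refine f.opNorm_le_bound h1re ?_
    intro x
    by_cases hx : f x = 0
    · simp only [hx, norm_zero]
      exact mul_nonneg h1re (norm_nonneg x)
    · set r : ℝ := ‖f x‖ with hrdef
      have hr : (0 : ℝ) < r := by
        simpa [hrdef] using (norm_pos_iff.mpr hx)
      set θ : ℂ := (starRingEnd ℂ) (f x) / (r : ℂ) with hθ
      set y := θ • x with hy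
      have hfy : f y = (r : ℂ) := by
        rw [hy, map_smul, smul_eq_mul, hθ]
        rw [div_mul_eq_mul_div, mul_comm, Complex.mul_conj, Complex.normSq_eq_norm_sq]
        rw [← hrdef]
        push_cast
        field_simp
      have hθnorm : ‖θ‖ = 1 := by
        rw [hθ, norm_div, RCLike.norm_conj]
        simp [← hrdef, abs_of_pos hr, div_self hr.ne']
      set h := (2⁻¹ : ℂ) • (y + star y) with hhdef
      set k := (-(Complex.I) * 2⁻¹ : ℂ) • (y - star y) with hkdef
      have hhsa : IsSelfAdjoint h := by
        rw [hhdef, IsSelfAdjoint, star_smul, star_add, star_star]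
        rw [show star (2⁻¹ : ℂ) = 2⁻¹ by simp [Complex.ext_iff]]
        rw [add_comm]
      have hksa : IsSelfAdjoint k := by
        rw [hkdef, IsSelfAdjoint, star_smul, star_sub, star_star]
        have e1 : star (-(Complex.I) * 2⁻¹ : ℂ) = Complex.I * 2⁻¹ := by
          simp [Complex.ext_iff]
        have e2 : (Complex.I * 2⁻¹ : ℂ) • (star y - y) = (-(Complex.I) * 2⁻¹ : ℂ) • (y - star y) := by
          rw [neg_mul, neg_smul, ← smul_neg, neg_sub]
        rw [e1, e2]
      have hyhk : y = h + Complex.I • k := by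
        rw [hhdef, hkdef, smul_smul]
        have e3 : Complex.I * (-(Complex.I) * 2⁻¹) = 2⁻¹ := by
          have : Complex.I * (-(Complex.I) * 2⁻¹) = -(Complex.I * Complex.I) * 2⁻¹ := by ring
          rw [this, Complex.I_mul_I]; ring
        rw [e3]
        module
      have hrcalc : r = (f h).re := by
        have : f y = f h + Complex.I * f k := by
          rw [hyhk, map_add, map_smul, smul_eq_mul]
          simp
        have him := aux_im_eq_zero f hf hksa
        have := congrArg Complex.re this
        rw [hfy] at this
        simpa [Complex.add_re, Complex.mul_re, him] using this
      have hnh : ‖h‖ ≤ ‖x‖ := by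
        have hny : ‖y‖ = ‖x‖ := by rw [hy, norm_smul, hθnorm, one_mul]
        calc ‖h‖ ≤ ‖(2⁻¹ : ℂ)‖ * ‖y + star y‖ := by rw [hhdef, norm_smul]
          _ ≤ 2⁻¹ * (‖y‖ + ‖star y‖) := by
              gcongr
              · simp
              · exact norm_add_le _ _
          _ = ‖x‖ := by rw [norm_star, hny]; ring
      calc ‖f x‖ = r := by rw [hrdef]
        _ = (f h).re := hrcalc
        _ ≤ (f 1).re * ‖h‖ := hre h hhsa
        _ ≤ (f 1).re * ‖x‖ := by gcongr
  · rintro ⟨h1, h2⟩ a ha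
    rcases subsingleton_or_nontrivial A with hA | hA
    · have : a = 0 := Subsingleton.elim a 0
      simp [this]
    set c := (f 1).re with hcdef
    have hc0 : 0 ≤ c := (Complex.nonneg_iff.mp h1).1
    have hf1 : f 1 = (c : ℂ) := by
      apply Complex.ext
      · simp [hcdef]
      · simpa using ((Complex.nonneg_iff.mp h1).2).symm
    by_cases hc : c = 0
    · have hn0 : ‖f‖ = 0 := le_antisymm (by rw [← hc]; exact h2) (norm_nonneg f)
      have : f = 0 := by rwa [norm_eq_zero] at hn0
      simp [this]
    have hcpos : 0 < c := lt_of_le_of_ne hc0 (Ne.symm hc)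
    -- Step 1: f is real on selfadjoint elements
    have him : ∀ s : A, IsSelfAdjoint s → (f s).im = 0 := by
      intro s hs
      set α := (f s).re with hα
      set β := (f s).im with hβ
      have key : ∀ t : ℝ, α ^ 2 + (β + t * c) ^ 2 ≤ c ^ 2 * (‖s‖ ^ 2 + t ^ 2) := by
        intro t
        set w : ℂ := (t : ℂ) * Complex.I with hw
        have hstarw : star w = -w := by simp [hw, Complex.ext_iff]
        have hprod : star (s + w • 1) * (s + w • 1) = s * s + ((t ^ 2 : ℝ) : ℂ) • 1 := by
          rw [star_add, star_smul, star_one, hs.star_eq, hstarw]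
          have eww : -w * w = ((t ^ 2 : ℝ) : ℂ) := by
            rw [hw]; push_cast
            have : -(↑t * Complex.I) * (↑t * Complex.I) = -(Complex.I * Complex.I) * (t:ℂ)^2 := by
              ring
            rw [this, Complex.I_mul_I]; ring
          have eww2 : w * -w = ((t ^ 2 : ℝ) : ℂ) := by rw [← eww]; ring
          simp only [mul_add, add_mul, smul_add, smul_mul_assoc, mul_smul_comm, mul_one,
            one_mul, smul_smul]
          rw [eww2]
          module
        have hnormsq : ‖s + w • 1‖ ^ 2 ≤ ‖s‖ ^ 2 + t ^ 2 := by
          have e1 : ‖s + w • 1‖ ^ 2 = ‖star (s + w • 1) * (s + w • 1)‖ := by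
            rw [CStarRing.norm_star_mul_self]; ring
          rw [e1, hprod]
          calc ‖s * s + ((t ^ 2 : ℝ) : ℂ) • 1‖ ≤ ‖s * s‖ + ‖((t ^ 2 : ℝ) : ℂ) • (1 : A)‖ :=
                norm_add_le _ _
            _ ≤ ‖s‖ ^ 2 + t ^ 2 := by
                rw [norm_smul, norm_one, mul_one]
                have := norm_mul_le s s
                refine add_le_add (by nlinarith [norm_mul_le s s, sq_abs (t:ℝ)]) ?_
                simp [Complex.norm_real, abs_of_nonneg (sq_nonneg t), le_refl]
        have hfval : f (s + w • 1) = Complex.mk α (β + t * c) := by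
          rw [map_add, map_smul, smul_eq_mul, hf1, hw]
          apply Complex.ext <;> simp [hα, hβ] <;> ring
        have hbound : ‖f (s + w • 1)‖ ≤ c * ‖s + w • 1‖ :=
          le_trans (f.le_opNorm _) (by gcongr)
        have hsq : ‖f (s + w • 1)‖ ^ 2 = α ^ 2 + (β + t * c) ^ 2 := by
          rw [hfval, Complex.sq_norm, Complex.normSq_mk]
          ring
        nlinarith [norm_nonneg (f (s + w • 1)), norm_nonneg (s + w • 1), hbound, hnormsq]
      by_contra hβne
      have key2 : ∀ t : ℝ, 2 * (β * c) * t ≤ c ^ 2 * ‖s‖ ^ 2 - α ^ 2 - β ^ 2 := by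
        intro t
        nlinarith [key t]
      set M := c ^ 2 * ‖s‖ ^ 2 - α ^ 2 - β ^ 2 with hM
      have hu : (2 : ℝ) * (β * c) ≠ 0 := by
        refine mul_ne_zero two_ne_zero (mul_ne_zero hβne hc)
      have := key2 ((M + 1) / (2 * (β * c)))
      rw [mul_div_cancel₀ _ hu] at this
      linarith
    -- Step 2
    have hasa : IsSelfAdjoint a := IsSelfAdjoint.of_nonneg ha
    set b := algebraMap ℝ A ‖a‖ - a with hb
    have hb0 : 0 ≤ b := sub_nonneg.2 hasa.le_algebraMap_norm_self
    have hbsa : IsSelfAdjoint b := IsSelfAdjoint.of_nonneg hb0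
    have hble : b ≤ algebraMap ℝ A ‖a‖ := by
      rw [hb]; exact sub_le_self _ ha
    have hnb : ‖b‖ ≤ ‖a‖ := by
      refine le_trans (CStarAlgebra.norm_le_norm_of_nonneg_of_le hb0 hble) ?_
      rw [norm_algebraMap']
      simp
    have hfb : (f b).re ≤ c * ‖a‖ := by
      calc (f b).re ≤ ‖f b‖ := Complex.re_le_norm (f b)
        _ ≤ ‖f‖ * ‖b‖ := f.le_opNorm b
        _ ≤ c * ‖a‖ := by gcongr
    have hfbeq : (f b).re = ‖a‖ * c - (f a).re := by
      rw [hb, map_sub, Algebra.algebraMap_eq_smul_one, f.map_smul_of_tower, hf1]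
      simp [Complex.sub_re, Complex.smul_re]
    rw [Complex.nonneg_iff]
    constructor
    · have := hfb
      rw [hfbeq] at this
      linarith
    · exact (him a hasa).symm
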